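/- Let G be a finite connected graph with an edge e = (v,w), and let G' be obtained from G by subdividing e: replace e by two edges (v,u) and (u,w) where u is a new vertex. Then for any vertex s of G, the number of s-rooted acyclic orientations of G is at most the number of s-rooted acyclic orientations of G'. -/

import Mathlib

/-- An acyclic orientation of a simple graph: each edge gets exactly one direction,
and there are no directed cycles. -/
structure AcyclicOrientation {V : Type*} (G : SimpleGraph V) where
  dir : V → V → Prop
  adj_of_dir : ∀ a b, dir a b → G.Adj a b
  total : ∀ a b, G.Adj a b → dir a b ∨ dir b a
  asymm : ∀ a b, dir a b → ¬ dir b a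
  acyclic : ∀ v, ¬ Relation.TransGen dir v v

/-- `s` is a target: all incident edges are directed towards `s`. -/
def AcyclicOrientation.IsTarget {V : Type*} {G : SimpleGraph V}
    (o : AcyclicOrientation G) (s : V) : Prop :=
  ∀ a, G.Adj a s → o.dir a s

/-- `s` is a source: all incident edges are directed away from `s`. -/
def AcyclicOrientation.IsSource {V : Type*} {G : SimpleGraph V}
    (o : AcyclicOrientation G) (s : V) : Prop :=
  ∀ a, G.Adj s a → o.dir s a

/-- An `s`-rooted acyclic orientation: `s` is the unique target. -/
def AcyclicOrientation.IsRooted {V : Type*} {G : SimpleGraph V}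
    (o : AcyclicOrientation G) (s : V) : Prop :=
  o.IsTarget s ∧ ∀ t, o.IsTarget t → t = s

/-- The number of `s`-rooted acyclic orientations of `G`. -/
noncomputable def rootedCount {V : Type*} (G : SimpleGraph V) (s : V) : ℕ :=
  Nat.card {o : AcyclicOrientation G // o.IsRooted s}

/-- Subdivide the edge `(v, w)` of `G`: remove it and add a new vertex (`none`)
adjacent to exactly `v` and `w`. -/
def subdivide {V : Type*} (G : SimpleGraph V) (v w : V) : SimpleGraph (Option V) where
  Adj a b :=
    (∃ x y : V, a = some x ∧ b = some y ∧ G.Adj x y ∧ ¬(x = v ∧ y = w) ∧ ¬(x = w ∧ y = v)) ∨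
    (a = none ∧ (b = some v ∨ b = some w)) ∨
    (b = none ∧ (a = some v ∨ a = some w))
  symm := by
    constructor
    rintro a b (⟨x, y, rfl, rfl, hxy, h1, h2⟩ | ⟨rfl, hb⟩ | ⟨rfl, ha⟩)
    · exact Or.inl ⟨y, x, rfl, rfl, hxy.symm,
        fun h => h2 ⟨h.2, h.1⟩, fun h => h1 ⟨h.2, h.1⟩⟩
    · exact Or.inr (Or.inr ⟨rfl, hb⟩)
    · exact Or.inr (Or.inl ⟨rfl, ha⟩)
  loopless := by
    constructor
    rintro a (⟨x, y, rfl, hy, hxy, -, -⟩ | ⟨rfl, h⟩ | ⟨rfl, h⟩)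
    · obtain rfl : x = y := Option.some.inj hy
      exact hxy.ne rfl
    all_goals simp at h

namespace Subdiv

variable {V : Type*} {G : SimpleGraph V}

def extDir (o : AcyclicOrientation G) (v w : V) : Option V → Option V → Prop
  | some a, some b => o.dir a b ∧ ¬(a = v ∧ b = w) ∧ ¬(a = w ∧ b = v)
  | some a, none => (a = v ∧ o.dir v w) ∨ (a = w ∧ o.dir w v)
  | none, some b => (b = w ∧ o.dir v w) ∨ (b = v ∧ o.dir w v)
  | none, none => False

def fRel (o : AcyclicOrientation G) (v w : V) : Option V → Option V → Prop
  | some a, some b => Relation.TransGen o.dir a b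
  | some a, none => (Relation.ReflTransGen o.dir a v ∧ o.dir v w) ∨
      (Relation.ReflTransGen o.dir a w ∧ o.dir w v)
  | none, some b => (o.dir v w ∧ Relation.ReflTransGen o.dir w b) ∨
      (o.dir w v ∧ Relation.ReflTransGen o.dir v b)
  | none, none => False

lemma transGen_fRel (o : AcyclicOrientation G) (v w : V) {x y : Option V}
    (h : Relation.TransGen (extDir o v w) x y) : fRel o v w x y := by
  induction h with
  | @single y h =>
    rcases x with _ | a <;> rcases y with _ | b <;>
      simp only [extDir, fRel] at h ⊢
    · rcases h with ⟨rfl, hd⟩ | ⟨rfl, hd⟩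
      · exact Or.inl ⟨hd, Relation.ReflTransGen.refl⟩
      · exact Or.inr ⟨hd, Relation.ReflTransGen.refl⟩
    · rcases h with ⟨rfl, hd⟩ | ⟨rfl, hd⟩
      · exact Or.inl ⟨Relation.ReflTransGen.refl, hd⟩
      · exact Or.inr ⟨Relation.ReflTransGen.refl, hd⟩
    · exact Relation.TransGen.single h.1
  | @tail c y hxc hcy ih =>
    rcases x with _ | a <;> rcases c with _ | c <;> rcases y with _ | b <;>
      simp only [extDir, fRel] at hcy ih ⊢
    · rcases hcy with ⟨rfl, hd⟩ | ⟨rfl, hd⟩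
      · rcases ih with ⟨hd', hr⟩ | ⟨hd', hr⟩
        · exact o.acyclic w (Relation.TransGen.tail' hr hd)
        · exact o.asymm _ _ hd hd'
      · rcases ih with ⟨hd', hr⟩ | ⟨hd', hr⟩
        · exact o.asymm _ _ hd hd'
        · exact o.acyclic v (Relation.TransGen.tail' hr hd)
    · rcases ih with ⟨hd, hr⟩ | ⟨hd, hr⟩
      · exact Or.inl ⟨hd, hr.tail hcy.1⟩
      · exact Or.inr ⟨hd, hr.tail hcy.1⟩
    · rcases hcy with ⟨rfl, hd⟩ | ⟨rfl, hd⟩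
      · rcases ih with ⟨hr, hd'⟩ | ⟨hr, hd'⟩
        · exact Relation.TransGen.tail' hr hd
        · exact absurd hd (o.asymm _ _ hd')
      · rcases ih with ⟨hr, hd'⟩ | ⟨hr, hd'⟩
        · exact absurd hd (o.asymm _ _ hd')
        · exact Relation.TransGen.tail' hr hd
    · rcases hcy with ⟨rfl, hd⟩ | ⟨rfl, hd⟩
      · exact Or.inl ⟨ih.to_reflTransGen, hd⟩
      · exact Or.inr ⟨ih.to_reflTransGen, hd⟩
    · exact ih.tail hcy.1


def ext (o : AcyclicOrientation G) {v w : V} (hvw : G.Adj v w) :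
    AcyclicOrientation (subdivide G v w) where
  dir := extDir o v w
  adj_of_dir := by
    rintro (_ | a) (_ | b) h
    · exact h.elim
    · rcases h with ⟨rfl, hd⟩ | ⟨rfl, hd⟩
      · exact Or.inr (Or.inl ⟨rfl, Or.inr rfl⟩)
      · exact Or.inr (Or.inl ⟨rfl, Or.inl rfl⟩)
    · rcases h with ⟨rfl, hd⟩ | ⟨rfl, hd⟩
      · exact Or.inr (Or.inr ⟨rfl, Or.inl rfl⟩)
      · exact Or.inr (Or.inr ⟨rfl, Or.inr rfl⟩)
    · exact Or.inl ⟨a, b, rfl, rfl, o.adj_of_dir _ _ h.1, h.2.1, h.2.2⟩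
  total := by
    rintro a b (⟨x, y, rfl, rfl, hxy, h1, h2⟩ | ⟨rfl, rfl | rfl⟩ | ⟨rfl, rfl | rfl⟩)
    · rcases o.total x y hxy with hd | hd
      · exact Or.inl ⟨hd, h1, h2⟩
      · exact Or.inr ⟨hd, fun h => h2 ⟨h.2, h.1⟩, fun h => h1 ⟨h.2, h.1⟩⟩
    all_goals rcases o.total v w hvw with hd | hd <;>
      first
      | exact Or.inl (Or.inl ⟨rfl, hd⟩)
      | exact Or.inl (Or.inr ⟨rfl, hd⟩)
      | exact Or.inr (Or.inl ⟨rfl, hd⟩)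
      | exact Or.inr (Or.inr ⟨rfl, hd⟩)
  asymm := by
    have hne := hvw.ne
    rintro (_ | a) (_ | b) h h'
    · exact h
    · rcases h with ⟨rfl, hd⟩ | ⟨rfl, hd⟩
      · rcases h' with ⟨he, _⟩ | ⟨_, hd'⟩
        · exact hne he.symm
        · exact o.asymm _ _ hd hd'
      · rcases h' with ⟨_, hd'⟩ | ⟨he, _⟩
        · exact o.asymm _ _ hd hd'
        · exact hne he
    · rcases h with ⟨rfl, hd⟩ | ⟨rfl, hd⟩
      · rcases h' with ⟨he, _⟩ | ⟨_, hd'⟩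
        · exact hne he
        · exact o.asymm _ _ hd hd'
      · rcases h' with ⟨_, hd'⟩ | ⟨he, _⟩
        · exact o.asymm _ _ hd hd'
        · exact hne he.symm
    · exact o.asymm _ _ h.1 h'.1
  acyclic := by
    rintro (_ | a) h
    · exact transGen_fRel o v w h
    · exact o.acyclic a (transGen_fRel o v w h)

lemma ext_rooted (o : AcyclicOrientation G) {v w : V} (hvw : G.Adj v w) (s : V)
    (hs : o.IsRooted s) : (ext o hvw).IsRooted (some s) := by
  obtain ⟨ht, hu⟩ := hs
  constructor
  · rintro (_ | a) hadj
    · rcases hadj with ⟨x, y, hx, _⟩ | ⟨_, h | h⟩ | ⟨h, _⟩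
      · exact absurd hx (by simp)
      · obtain rfl : s = v := Option.some.inj h
        exact Or.inr ⟨rfl, ht _ hvw.symm⟩
      · obtain rfl : s = w := Option.some.inj h
        exact Or.inl ⟨rfl, ht _ hvw⟩
      · exact absurd h (by simp)
    · rcases hadj with ⟨x, y, hx, hy, hxy, h1, h2⟩ | ⟨h, _⟩ | ⟨hs', _⟩
      · obtain rfl : a = x := Option.some.inj hx
        obtain rfl : s = y := Option.some.inj hy
        exact ⟨ht _ hxy, h1, h2⟩
      · exact absurd h (by simp)
      · exact absurd hs' (by simp)
  · rintro (_ | t) htar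
    · have h1 := htar (some v) (Or.inr (Or.inr ⟨rfl, Or.inl rfl⟩))
      have h2 := htar (some w) (Or.inr (Or.inr ⟨rfl, Or.inr rfl⟩))
      rcases h1 with ⟨_, hd1⟩ | ⟨he, hd1⟩
      · rcases h2 with ⟨he, hd2⟩ | ⟨_, hd2⟩
        · exact absurd he.symm hvw.ne
        · exact absurd hd2 (o.asymm _ _ hd1)
      · exact absurd he hvw.ne
    · congr 1
      apply hu
      intro a hadj
      by_cases hev : a = v ∧ t = w
      · obtain ⟨rfl, rfl⟩ := hev
        have h1 := htar none (Or.inr (Or.inl ⟨rfl, Or.inr rfl⟩))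
        rcases h1 with ⟨_, hd⟩ | ⟨he, hd⟩
        · exact hd
        · exact absurd he.symm hvw.ne
      · by_cases hew : a = w ∧ t = v
        · obtain ⟨rfl, rfl⟩ := hew
          have h1 := htar none (Or.inr (Or.inl ⟨rfl, Or.inl rfl⟩))
          rcases h1 with ⟨he, hd⟩ | ⟨_, hd⟩
          · exact absurd he hvw.ne
          · exact hd
        · exact (htar (some a) (Or.inl ⟨a, t, rfl, rfl, hadj, hev, hew⟩)).1

lemma ext_injective {v w : V} (hvw : G.Adj v w) :
    Function.Injective (fun o : AcyclicOrientation G => ext o hvw) := by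
  intro o₁ o₂ h
  have hd : extDir o₁ v w = extDir o₂ v w := congrArg AcyclicOrientation.dir h
  have key : ∀ a b, o₁.dir a b ↔ o₂.dir a b := by
    intro a b
    by_cases hadj : G.Adj a b
    · by_cases hev : a = v ∧ b = w
      · obtain ⟨rfl, rfl⟩ := hev
        have heq : extDir o₁ a b (some a) none = extDir o₂ a b (some a) none := by rw [hd]
        change (a = a ∧ o₁.dir a b ∨ a = b ∧ o₁.dir b a) =
          (a = a ∧ o₂.dir a b ∨ a = b ∧ o₂.dir b a) at heq
        constructor
        · intro hdir
          rcases heq ▸ (Or.inl ⟨rfl, hdir⟩ : a = a ∧ o₁.dir a b ∨ a = b ∧ o₁.dir b a) with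
            ⟨_, hd'⟩ | ⟨he, hd'⟩
          · exact hd'
          · exact absurd he hadj.ne
        · intro hdir
          rcases heq.symm ▸ (Or.inl ⟨rfl, hdir⟩ : a = a ∧ o₂.dir a b ∨ a = b ∧ o₂.dir b a) with
            ⟨_, hd'⟩ | ⟨he, hd'⟩
          · exact hd'
          · exact absurd he hadj.ne
      · by_cases hew : a = w ∧ b = v
        · obtain ⟨rfl, rfl⟩ := hew
          have heq : extDir o₁ b a (some a) none = extDir o₂ b a (some a) none := by rw [hd]
          change (a = b ∧ o₁.dir b a ∨ a = a ∧ o₁.dir a b) =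
            (a = b ∧ o₂.dir b a ∨ a = a ∧ o₂.dir a b) at heq
          constructor
          · intro hdir
            rcases heq ▸ (Or.inr ⟨rfl, hdir⟩ : a = b ∧ o₁.dir b a ∨ a = a ∧ o₁.dir a b) with
              ⟨he, hd'⟩ | ⟨_, hd'⟩
            · exact absurd he hadj.ne
            · exact hd'
          · intro hdir
            rcases heq.symm ▸ (Or.inr ⟨rfl, hdir⟩ : a = b ∧ o₂.dir b a ∨ a = a ∧ o₂.dir a b) with
              ⟨he, hd'⟩ | ⟨_, hd'⟩
            · exact absurd he hadj.ne
            · exact hd'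
        · have heq : extDir o₁ v w (some a) (some b) = extDir o₂ v w (some a) (some b) := by
            rw [hd]
          change (o₁.dir a b ∧ _ ∧ _) = (o₂.dir a b ∧ _ ∧ _) at heq
          constructor
          · intro hdir
            exact (heq ▸ (⟨hdir, hev, hew⟩ : o₁.dir a b ∧ ¬(a = v ∧ b = w) ∧
              ¬(a = w ∧ b = v))).1
          · intro hdir
            exact (heq.symm ▸ (⟨hdir, hev, hew⟩ : o₂.dir a b ∧ ¬(a = v ∧ b = w) ∧
              ¬(a = w ∧ b = v))).1
    · exact ⟨fun hdir => absurd (o₁.adj_of_dir _ _ hdir) hadj,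
        fun hdir => absurd (o₂.adj_of_dir _ _ hdir) hadj⟩
  cases o₁; cases o₂
  simp only [AcyclicOrientation.mk.injEq]
  funext a b
  exact propext (key a b)

instance instFinOption {α : Type*} [Finite α] : Finite (Option α) :=
  Finite.of_equiv _ (Equiv.optionEquivSumPUnit.{0} α).symm

instance instFin {W : Type*} [Finite W] (H : SimpleGraph W) :
    Finite (AcyclicOrientation H) :=
  Finite.of_injective (fun o => o.dir) (by
    intro o₁ o₂ h
    cases o₁; cases o₂
    simpa using h)

end Subdiv

/-- Subdividing an edge does not decrease the number of `s`-rooted acyclic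
orientations. -/
theorem rootedCount_le_subdivide {V : Type*} [Finite V] (G : SimpleGraph V)
    (hG : G.Connected) (v w : V) (hvw : G.Adj v w) (s : V) :
    rootedCount G s ≤ rootedCount (subdivide G v w) (some s) := by
  apply Nat.card_le_card_of_injective
    (fun o : {o : AcyclicOrientation G // o.IsRooted s} =>
      (⟨Subdiv.ext o.1 hvw, Subdiv.ext_rooted o.1 hvw s o.2⟩ :
        {o : AcyclicOrientation (subdivide G v w) // o.IsRooted (some s)}))
  intro o₁ o₂ h
  exact Subtype.ext (Subdiv.ext_injective hvw (Subtype.ext_iff.mp h))
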